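/- (Reciprocally convex combination lemma, two-block case) Let R = R' ≥ 0 and G be n×n real matrices such that the block matrix [[R, G],[G', R]] is positive semidefinite. Then for any δ_0, δ_1 ∈ R^n and any α, β > 0 with α + β = 1, (1/α) δ_0' R δ_0 + (1/β) δ_1' R δ_1 ≥ δ_0' R δ_0 + δ_1' R δ_1 + δ_0'(G + G') δ_1. -/

import Mathlib

open Matrix

/-- Reciprocally convex combination lemma (two-block case):
if `[[R, G],[Gᵀ, R]] ⪰ 0` with `R = Rᵀ ⪰ 0`, then for `α, β > 0`, `α + β = 1`,
`(1/α) δ₀'Rδ₀ + (1/β) δ₁'Rδ₁ ≥ δ₀'Rδ₀ + δ₁'Rδ₁ + δ₀'(G + Gᵀ)δ₁`. -/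
theorem reciprocally_convex_two_block {n : ℕ}
    (R G : Matrix (Fin n) (Fin n) ℝ) (hRsymm : R.IsSymm) (hRpsd : R.PosSemidef)
    (hblock : (Matrix.fromBlocks R G Gᵀ R).PosSemidef)
    (δ₀ δ₁ : Fin n → ℝ) (α β : ℝ) (hα : 0 < α) (hβ : 0 < β) (hαβ : α + β = 1) :
    δ₀ ⬝ᵥ R *ᵥ δ₀ + δ₁ ⬝ᵥ R *ᵥ δ₁ + δ₀ ⬝ᵥ (G + Gᵀ) *ᵥ δ₁
      ≤ (1 / α) * (δ₀ ⬝ᵥ R *ᵥ δ₀) + (1 / β) * (δ₁ ⬝ᵥ R *ᵥ δ₁) := by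
  set s := Real.sqrt (β / α) with hs
  set t := Real.sqrt (α / β) with ht
  have hs2 : s ^ 2 = β / α := Real.sq_sqrt (by positivity)
  have ht2 : t ^ 2 = α / β := Real.sq_sqrt (by positivity)
  have hst : s * t = 1 := by
    rw [hs, ht, ← Real.sqrt_mul (by positivity)]
    rw [div_mul_div_comm, mul_comm β α, div_self (by positivity), Real.sqrt_one]
  have key := hblock.dotProduct_mulVec_nonneg (Sum.elim (s • δ₀) (-(t • δ₁)))
  have key2 := hblock.dotProduct_mulVec_nonneg (Sum.elim (t • δ₁) (-(s • δ₀)))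
  rw [fromBlocks_mulVec] at key key2
  simp only [star_trivial, sumElim_dotProduct_sumElim, Sum.elim_comp_inl,
    Sum.elim_comp_inr, dotProduct_add, mulVec_neg, mulVec_smul, dotProduct_neg,
    dotProduct_smul, smul_dotProduct, neg_dotProduct, smul_eq_mul, neg_neg] at key key2
  have hGT : δ₁ ⬝ᵥ Gᵀ *ᵥ δ₀ = δ₀ ⬝ᵥ G *ᵥ δ₁ := by
    rw [dotProduct_mulVec, vecMul_transpose, dotProduct_comm]
  have hsym : δ₁ ⬝ᵥ R *ᵥ δ₀ = δ₀ ⬝ᵥ R *ᵥ δ₁ := by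
    nth_rewrite 1 [← hRsymm.eq]
    rw [dotProduct_mulVec, vecMul_transpose, dotProduct_comm]
  have hGT2 : δ₀ ⬝ᵥ Gᵀ *ᵥ δ₁ = δ₁ ⬝ᵥ G *ᵥ δ₀ := by
    rw [dotProduct_mulVec, vecMul_transpose, dotProduct_comm]
  have hadd : δ₀ ⬝ᵥ (G + Gᵀ) *ᵥ δ₁ = δ₀ ⬝ᵥ G *ᵥ δ₁ + δ₁ ⬝ᵥ G *ᵥ δ₀ := by
    rw [add_mulVec, dotProduct_add, hGT2]
  have h1a : (1:ℝ)/α = 1 + β/α := by field_simp; linarith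
  have h1b : (1:ℝ)/β = 1 + α/β := by field_simp; linarith
  rw [hadd, h1a, h1b]
  rw [hGT] at key
  rw [hGT2] at key2
  ring_nf at key key2
  rw [hs2, ht2] at key key2
  rw [hst] at key key2
  linarith [key, key2]
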